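/- Let G be a k-extendable non-bipartite graph on ν vertices with k ≥ (ν+2)/4, and suppose S ⊆ V(G) with |S| = 2k is chosen so that G − S has no perfect matching and the induced subgraph G[S] has maximum matching size r₀ as large as possible among all such S. Then r₀ = k − 1. -/

import Mathlib

open SimpleGraph

/-- `G` has a matching with exactly `k` edges. -/
def HasMatchingOfSize {V : Type*} (G : SimpleGraph V) (k : ℕ) : Prop :=
  ∃ M : G.Subgraph, M.IsMatching ∧ M.edgeSet.ncard = k

/-- `G` is `k`-extendable: connected, has a matching of size `k`, and every
matching of size `k` extends to a perfect matching. -/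
def Extendable {V : Type*} (G : SimpleGraph V) (k : ℕ) : Prop :=
  G.Connected ∧ HasMatchingOfSize G k ∧
    ∀ M : G.Subgraph, M.IsMatching → M.edgeSet.ncard = k →
      ∃ M' : G.Subgraph, M ≤ M' ∧ M'.IsPerfectMatching

/-- `G` is `n`-factor-critical: deleting any `n` vertices leaves a graph with
a perfect matching. -/
def FactorCritical {V : Type*} [Fintype V] (G : SimpleGraph V) (n : ℕ) : Prop :=
  ∀ S : Finset V, S.card = n →
    ∃ M : (G.induce ((↑S : Set V)ᶜ)).Subgraph, M.IsPerfectMatching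

/-- `G` is `k½`-extendable: for every vertex `v`, `G - v` has a matching of
size `k`, and every matching of size `k` in `G - v` extends to a perfect
matching of `G - v`. -/
def HalfExtendable {V : Type*} (G : SimpleGraph V) (k : ℕ) : Prop :=
  ∀ v : V,
    HasMatchingOfSize (G.induce ({v}ᶜ : Set V)) k ∧
    ∀ M : (G.induce ({v}ᶜ : Set V)).Subgraph, M.IsMatching → M.edgeSet.ncard = k →
      ∃ M' : (G.induce ({v}ᶜ : Set V)).Subgraph, M ≤ M' ∧ M'.IsPerfectMatching

/-- The size of a maximum matching of `H`. -/
noncomputable def maxMatchSize {W : Type*} (H : SimpleGraph W) : ℕ :=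
  sSup {n | HasMatchingOfSize H n}

namespace Stmt14Aux

open SimpleGraph.Subgraph

variable {V : Type*} {G : SimpleGraph V} {M N : G.Subgraph} {v w a b : V}

lemma matching_unique (hM : M.IsMatching) (h1 : M.Adj v w) (h2 : M.Adj v a) : w = a :=
  ((hM (M.edge_vert h1)).unique h1 h2)

lemma matching_exists (hM : M.IsMatching) (hv : v ∈ M.verts) : ∃ w, M.Adj v w :=
  (hM hv).exists

/-- Partner via a larger matching agrees. -/
lemma partner_eq_of_le (hN : N.IsMatching) (hMN : M ≤ N) (h1 : M.Adj v w) (h2 : N.Adj v a) :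
    w = a :=
  matching_unique hN (hMN.2 h1) h2

lemma bot_isMatching : (⊥ : G.Subgraph).IsMatching := by
  intro v hv
  simp only [Subgraph.verts_bot, Set.mem_empty_iff_false] at hv

/-- Delete one edge from a matching. -/
lemma isMatching_delete (hM : M.IsMatching) (hab : M.Adj a b) :
    ∃ M' : G.Subgraph, M'.IsMatching ∧ M' ≤ M ∧ M'.verts = M.verts \ {a, b} ∧
      M'.edgeSet = M.edgeSet \ {s(a, b)} := by
  refine ⟨M.induce (M.verts \ {a, b}), ?_, ?_, Subgraph.induce_verts _ _, ?_⟩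
  · intro v hv
    rw [Subgraph.induce_verts] at hv
    obtain ⟨q, hq⟩ := matching_exists hM hv.1
    have hqa : q ≠ a := by
      rintro rfl
      have : v = b := matching_unique hM hq.symm hab
      exact hv.2 (by simp [this])
    have hqb : q ≠ b := by
      rintro rfl
      have : v = a := matching_unique hM hq.symm hab.symm
      exact hv.2 (by simp [this])
    refine ⟨q, ⟨hv, ⟨⟨M.edge_vert hq.symm, by simp [hqa, hqb]⟩, hq⟩⟩, ?_⟩
    rintro y ⟨-, -, hy⟩
    exact matching_unique hM hy hq
  · constructor
    · rw [Subgraph.induce_verts]; exact Set.diff_subset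
    · intro x y hxy
      rw [Subgraph.induce_adj] at hxy
      exact hxy.2.2
  · ext e
    induction e with
    | _ x y =>
      simp only [Subgraph.mem_edgeSet, Subgraph.induce_adj, Set.mem_diff,
        Set.mem_singleton_iff]
      constructor
      · rintro ⟨hx, hy, hxy⟩
        refine ⟨hxy, ?_⟩
        intro he
        rw [Sym2.eq_iff] at he
        rcases he with ⟨rfl, rfl⟩ | ⟨rfl, rfl⟩
        · exact hx.2 (by simp)
        · exact hx.2 (by simp)
      · rintro ⟨hxy, hne⟩
        have hxab : x ∉ ({a, b} : Set V) := by
          intro hx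
          rcases hx with rfl | rfl
          · refine hne ?_
            rw [Sym2.eq_iff]
            exact Or.inl ⟨rfl, matching_unique hM hxy hab⟩
          · refine hne ?_
            rw [Sym2.eq_iff]
            exact Or.inr ⟨rfl, matching_unique hM hxy hab.symm⟩
        have hyab : y ∉ ({a, b} : Set V) := by
          intro hy
          rcases hy with rfl | rfl
          · refine hne ?_
            rw [Sym2.eq_iff]
            exact Or.inr ⟨matching_unique hM hxy.symm hab, rfl⟩
          · refine hne ?_
            rw [Sym2.eq_iff]
            exact Or.inl ⟨matching_unique hM hxy.symm hab.symm, rfl⟩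
        exact ⟨⟨M.edge_vert hxy, hxab⟩, ⟨M.edge_vert hxy.symm, hyab⟩, hxy⟩

/-- Add an edge (both endpoints uncovered) to a matching. -/
lemma isMatching_addEdge (hM : M.IsMatching) (hab : G.Adj a b) (ha : a ∉ M.verts)
    (hb : b ∉ M.verts) :
    ∃ N : G.Subgraph, N.IsMatching ∧ M ≤ N ∧ N.verts = M.verts ∪ {a, b} ∧
      N.edgeSet = M.edgeSet ∪ {s(a, b)} := by
  refine ⟨M ⊔ G.subgraphOfAdj hab, ?_, le_sup_left, ?_, ?_⟩
  · refine Subgraph.IsMatching.sup hM (Subgraph.IsMatching.subgraphOfAdj hab) ?_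
    rw [hM.support_eq_verts, (Subgraph.IsMatching.subgraphOfAdj hab).support_eq_verts]
    simp only [subgraphOfAdj_verts]
    rw [Set.disjoint_iff]
    rintro x ⟨hx1, hx2⟩
    rcases hx2 with rfl | rfl
    · exact ha hx1
    · exact hb hx1
  · rw [Subgraph.verts_sup, subgraphOfAdj_verts]
  · rw [Subgraph.edgeSet_sup]
    congr 1
    ext e
    induction e with
    | _ x y =>
      simp only [Subgraph.mem_edgeSet, subgraphOfAdj_adj, Set.mem_singleton_iff]
      exact eq_comm

/-- Union of two matchings with disjoint vertex sets. -/
lemma isMatching_disjUnion (hM : M.IsMatching) (hN : N.IsMatching)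
    (hd : Disjoint M.verts N.verts) :
    (M ⊔ N).IsMatching ∧ (M ⊔ N).verts = M.verts ∪ N.verts ∧
      (M ⊔ N).edgeSet = M.edgeSet ∪ N.edgeSet ∧ Disjoint M.edgeSet N.edgeSet := by
  refine ⟨?_, Subgraph.verts_sup M N, Subgraph.edgeSet_sup, ?_⟩
  · exact Subgraph.IsMatching.sup hM hN
      (by rw [hM.support_eq_verts, hN.support_eq_verts]; exact hd)
  · rw [Set.disjoint_left]
    intro e heM heN
    induction e with
    | _ x y =>
      rw [Subgraph.mem_edgeSet] at heM heN
      exact Set.disjoint_left.mp hd (M.edge_vert heM) (N.edge_vert heN)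

variable [Fintype V]

/-- A matching covers twice as many vertices as it has edges. -/
lemma matching_verts_ncard : ∀ (n : ℕ) (M : G.Subgraph), M.IsMatching →
    M.edgeSet.ncard = n → M.verts.ncard = 2 * n := by
  intro n
  induction n with
  | zero =>
    intro M hM hcard
    have he : M.edgeSet = ∅ := by
      rw [← Set.ncard_eq_zero (Set.toFinite _)] at *
      exact hcard
    have hv : M.verts = ∅ := by
      ext v
      simp only [Set.mem_empty_iff_false, iff_false]
      intro hv
      obtain ⟨q, hq⟩ := matching_exists hM hv
      have : s(v, q) ∈ M.edgeSet := Subgraph.mem_edgeSet.2 hq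
      rw [he] at this
      exact this
    rw [hv]
    simp
  | succ n ih =>
    intro M hM hcard
    have hne : M.edgeSet.Nonempty := by
      rw [Set.nonempty_iff_ne_empty]
      intro h
      rw [h] at hcard
      simp at hcard
    obtain ⟨e, he⟩ := hne
    induction e with
    | _ x y =>
      rw [Subgraph.mem_edgeSet] at he
      obtain ⟨M', hM', hle, hverts, hedges⟩ := isMatching_delete hM he
      have hxy : x ≠ y := (M.adj_sub he).ne
      have hx : x ∈ M.verts := M.edge_vert he
      have hy : y ∈ M.verts := M.edge_vert he.symm
      have hcard' : M'.edgeSet.ncard = n := by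
        rw [hedges, Set.ncard_diff_singleton_of_mem (Subgraph.mem_edgeSet.2 he), hcard]
        omega
      have hv' := ih M' hM' hcard'
      rw [hverts] at hv'
      have hsub : ({x, y} : Set V) ⊆ M.verts := by
        rintro z (rfl | rfl) <;> assumption
      have h2 : ({x, y} : Set V).ncard = 2 := Set.ncard_pair hxy
      have hdiff : (M.verts \ {x, y}).ncard = M.verts.ncard - 2 := by
        rw [Set.ncard_diff hsub (Set.toFinite _), h2]
      have hge : 2 ≤ M.verts.ncard := by
        calc 2 = ({x, y} : Set V).ncard := h2.symm
        _ ≤ M.verts.ncard := Set.ncard_le_ncard hsub (Set.toFinite _)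
      omega

/-- Extract a sub-matching with a prescribed number of edges. -/
lemma exists_submatching : ∀ (n : ℕ) (M : G.Subgraph), M.IsMatching →
    M.edgeSet.ncard = n → ∀ j ≤ n, ∃ N : G.Subgraph, N.IsMatching ∧ N ≤ M ∧
      N.verts ⊆ M.verts ∧ N.edgeSet.ncard = j := by
  intro n
  induction n with
  | zero =>
    intro M hM hcard j hj
    interval_cases j
    exact ⟨M, hM, le_refl _, subset_rfl, hcard⟩
  | succ n ih =>
    intro M hM hcard j hj
    rcases Nat.eq_or_lt_of_le hj with rfl | hlt
    · exact ⟨M, hM, le_refl _, subset_rfl, hcard⟩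
    · have hne : M.edgeSet.Nonempty := by
        rw [Set.nonempty_iff_ne_empty]
        intro h
        rw [h] at hcard
        simp at hcard
      obtain ⟨e, he⟩ := hne
      induction e with
      | _ x y =>
        rw [Subgraph.mem_edgeSet] at he
        obtain ⟨M', hM', hle, hverts, hedges⟩ := isMatching_delete hM he
        have hcard' : M'.edgeSet.ncard = n := by
          rw [hedges, Set.ncard_diff_singleton_of_mem (Subgraph.mem_edgeSet.2 he), hcard]
          omega
        obtain ⟨N, h1, h2, h3, h4⟩ := ih M' hM' hcard' j (by omega)
        exact ⟨N, h1, le_trans h2 hle, subset_trans h3 (by rw [hverts]; exact Set.diff_subset), h4⟩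

omit [Fintype V] in
/-- Induce a matching on a set closed under taking partners. -/
lemma isMatching_induce_closed {Q : G.Subgraph} (hQ : Q.IsMatching) (t : Set V)
    (ht : t ⊆ Q.verts) (hcl : ∀ v ∈ t, ∀ w, Q.Adj v w → w ∈ t) :
    (Q.induce t).IsMatching ∧ (Q.induce t).verts = t ∧ Q.induce t ≤ Q := by
  refine ⟨?_, Subgraph.induce_verts _ _, ?_⟩
  · intro v hv
    rw [Subgraph.induce_verts] at hv
    obtain ⟨q, hq⟩ := matching_exists hQ (ht hv)
    refine ⟨q, ⟨hv, hcl v hv q hq, hq⟩, ?_⟩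
    rintro y ⟨-, -, hy⟩
    exact matching_unique hQ hy hq
  · constructor
    · rw [Subgraph.induce_verts]; exact ht
    · intro x y hxy
      rw [Subgraph.induce_adj] at hxy
      exact hxy.2.2



section Transfers

variable {t : Set V}

/-- The inclusion homomorphism from an induced subgraph. -/
def inclHom (G : SimpleGraph V) (t : Set V) : G.induce t →g G where
  toFun := Subtype.val
  map_rel' := fun h => h

omit [Fintype V] in
lemma inclHom_injective : Function.Injective (inclHom G t) := Subtype.val_injective

omit [Fintype V] in
/-- Transfer a matching of `G.induce t` to a matching of `G` supported inside `t`. -/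
lemma matching_of_induce {M : (G.induce t).Subgraph} (hM : M.IsMatching) :
    ∃ N : G.Subgraph, N.IsMatching ∧ N.verts = Subtype.val '' M.verts ∧
      N.edgeSet.ncard = M.edgeSet.ncard := by
  refine ⟨M.map (inclHom G t), Subgraph.IsMatching.map _ inclHom_injective hM, ?_, ?_⟩
  · rfl
  · have he : (M.map (inclHom G t)).edgeSet = Sym2.map (inclHom G t) '' M.edgeSet := by
      ext e
      induction e with
      | _ x y =>
        simp only [Subgraph.mem_edgeSet, Subgraph.map_adj, Relation.Map]
        constructor
        · rintro ⟨a, b, hab, rfl, rfl⟩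
          exact ⟨s(a, b), Subgraph.mem_edgeSet.2 hab, rfl⟩
        · rintro ⟨e', he', hee⟩
          induction e' with
          | _ a b =>
            rw [Sym2.map_pair_eq, Sym2.eq_iff] at hee
            rw [Subgraph.mem_edgeSet] at he'
            rcases hee with ⟨h1, h2⟩ | ⟨h1, h2⟩
            · exact ⟨a, b, he', h1, h2⟩
            · exact ⟨b, a, he'.symm, h2, h1⟩
    rw [he, Set.ncard_image_of_injective _ (Sym2.map.injective inclHom_injective)]

/-- Restrict a subgraph of `G` to a subgraph of `G.induce t`. -/
def toInduceSub (G : SimpleGraph V) (t : Set V) (N : G.Subgraph) : (G.induce t).Subgraph where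
  verts := Subtype.val ⁻¹' N.verts
  Adj a b := N.Adj a b
  adj_sub h := h.adj_sub
  edge_vert h := N.edge_vert h
  symm := ⟨fun a b h => h.symm⟩

omit [Fintype V] in
lemma toInduceSub_edgeSet_ncard (N : G.Subgraph) (hsub : N.verts ⊆ t) :
    (toInduceSub G t N).edgeSet.ncard = N.edgeSet.ncard := by
  have himg : N.edgeSet = Sym2.map (Subtype.val : t → V) '' (toInduceSub G t N).edgeSet := by
    ext e
    induction e with
    | _ x y =>
      constructor
      · intro he
        rw [Subgraph.mem_edgeSet] at he
        refine ⟨s(⟨x, hsub (N.edge_vert he)⟩, ⟨y, hsub (N.edge_vert he.symm)⟩), ?_, rfl⟩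
        exact Subgraph.mem_edgeSet.2 he
      · rintro ⟨e', he', hee⟩
        induction e' with
        | _ a b =>
          rw [Subgraph.mem_edgeSet] at he'
          rw [Sym2.map_pair_eq, Sym2.eq_iff] at hee
          rw [Subgraph.mem_edgeSet]
          rcases hee with ⟨h1, h2⟩ | ⟨h1, h2⟩
          · rw [← h1, ← h2]; exact he'
          · rw [← h1, ← h2]; exact he'.symm
  rw [himg, Set.ncard_image_of_injective _ (Sym2.map.injective Subtype.val_injective)]

omit [Fintype V] in
/-- Transfer a matching of `G` supported inside `t` to a matching of `G.induce t`. -/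
lemma matching_to_induce {N : G.Subgraph} (hN : N.IsMatching) (hsub : N.verts ⊆ t) :
    ∃ M : (G.induce t).Subgraph, M.IsMatching ∧ M.verts = Subtype.val ⁻¹' N.verts ∧
      M.edgeSet.ncard = N.edgeSet.ncard := by
  refine ⟨toInduceSub G t N, ?_, rfl, toInduceSub_edgeSet_ncard N hsub⟩
  intro v hv
  have hv' : (v : V) ∈ N.verts := hv
  obtain ⟨q, hq⟩ := matching_exists hN hv'
  refine ⟨⟨q, hsub (N.edge_vert hq.symm)⟩, hq, ?_⟩
  rintro ⟨y, hy⟩ hadj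
  simp only [Subtype.mk.injEq]
  exact matching_unique hN hadj hq

end Transfers


section Interface

variable {t : Set V}

lemma zero_hasMatching (H : SimpleGraph V) : HasMatchingOfSize H 0 :=
  ⟨⊥, bot_isMatching, by rw [Subgraph.edgeSet_bot]; simp⟩

omit [Fintype V] in
lemma bddAbove_matchSizes {W : Type*} [Finite W] (H : SimpleGraph W) :
    BddAbove {n | HasMatchingOfSize H n} := by
  refine ⟨Nat.card (Sym2 W), ?_⟩
  rintro n ⟨M, -, hcard⟩
  rw [← hcard]
  calc M.edgeSet.ncard ≤ (Set.univ : Set (Sym2 W)).ncard :=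
        Set.ncard_le_ncard (Set.subset_univ _) (Set.toFinite _)
    _ = Nat.card (Sym2 W) := by rw [Set.ncard_univ]

omit [Fintype V] in
lemma le_maxMatchSize {W : Type*} [Finite W] {H : SimpleGraph W} {n : ℕ}
    (h : HasMatchingOfSize H n) : n ≤ maxMatchSize H :=
  le_csSup (bddAbove_matchSizes H) h

omit [Fintype V] in
lemma maxMatchSize_spec {W : Type*} [Finite W] (H : SimpleGraph W) :
    HasMatchingOfSize H (maxMatchSize H) := by
  have : maxMatchSize H ∈ {n | HasMatchingOfSize H n} :=
    Nat.sSup_mem ⟨0, ⟨⊥, fun v hv => by simp [Subgraph.verts_bot] at hv,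
      by rw [Subgraph.edgeSet_bot]; simp⟩⟩ (bddAbove_matchSizes H)
  exact this

/-- The main interface: matchings of `G.induce t` correspond to matchings of `G` inside `t`. -/
lemma hasMatchingOfSize_induce_iff {n : ℕ} :
    HasMatchingOfSize (G.induce t) n ↔
      ∃ N : G.Subgraph, N.IsMatching ∧ N.verts ⊆ t ∧ N.edgeSet.ncard = n := by
  constructor
  · rintro ⟨M, hM, hcard⟩
    obtain ⟨N, hN, hverts, hecard⟩ := matching_of_induce hM
    refine ⟨N, hN, ?_, by rw [hecard, hcard]⟩
    rw [hverts]
    rintro v ⟨x, -, rfl⟩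
    exact x.2
  · rintro ⟨N, hN, hsub, hcard⟩
    obtain ⟨M, hM, -, hecard⟩ := matching_to_induce hN hsub
    exact ⟨M, hM, by rw [hecard, hcard]⟩

/-- Upper bound interface for `maxMatchSize` of an induced subgraph. -/
lemma le_max_of_matching {N : G.Subgraph} (hN : N.IsMatching) (hsub : N.verts ⊆ t) :
    N.edgeSet.ncard ≤ maxMatchSize (G.induce t) :=
  le_maxMatchSize (hasMatchingOfSize_induce_iff.2 ⟨N, hN, hsub, rfl⟩)

/-- Perfect matchings of `G.induce t` correspond to matchings of `G` with vertex set `t`. -/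
lemma perfectMatching_induce_iff :
    (∃ M : (G.induce t).Subgraph, M.IsPerfectMatching) ↔
      ∃ N : G.Subgraph, N.IsMatching ∧ N.verts = t := by
  constructor
  · rintro ⟨M, hM, hsp⟩
    obtain ⟨N, hN, hverts, -⟩ := matching_of_induce hM
    refine ⟨N, hN, ?_⟩
    rw [hverts]
    have : M.verts = Set.univ := Set.eq_univ_of_forall hsp
    rw [this]
    exact Subtype.coe_image_univ t
  · rintro ⟨N, hN, hverts⟩
    obtain ⟨M, hM, hMverts, -⟩ := matching_to_induce hN hverts.le
    refine ⟨M, hM, ?_⟩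
    intro v
    rw [hMverts]
    simp only [Set.mem_preimage, hverts]
    exact v.2

end Interface


section Key

/-- Key augmentation lemma: given a perfect matching `P` of `G` and a matching `M` inside `t`
with an uncovered vertex `u ∈ t`, there is a matching with one more edge inside `t ∪ {w}`
for some vertex `w`. Induction on the number of edges of `M` outside `P`. -/
lemma key_augment {P : G.Subgraph} (hP : P.IsPerfectMatching) {t : Set V} :
    ∀ (n : ℕ) (M : G.Subgraph) (u : V), M.IsMatching → M.verts ⊆ t →
      (M.edgeSet \ P.edgeSet).ncard = n → u ∈ t → u ∉ M.verts →
      ∃ (w : V) (N : G.Subgraph), N.IsMatching ∧ N.verts ⊆ t ∪ {w} ∧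
        N.edgeSet.ncard = M.edgeSet.ncard + 1 := by
  intro n
  induction n with
  | zero =>
    intro M u hM hsub hexc hut huM
    obtain ⟨y, hy⟩ := (hP.1 (hP.2 u)).exists
    by_cases hyM : y ∈ M.verts
    · exfalso
      obtain ⟨z, hz⟩ := matching_exists hM hyM
      have hMP : M.edgeSet ⊆ P.edgeSet := by
        rw [Set.ncard_eq_zero (Set.toFinite _), Set.diff_eq_empty] at hexc
        exact hexc
      have hPyz : P.Adj y z := Subgraph.mem_edgeSet.1 (hMP (Subgraph.mem_edgeSet.2 hz))
      have : u = z := matching_unique hP.1 hy.symm hPyz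
      rw [this] at huM
      exact huM (M.edge_vert hz.symm)
    · obtain ⟨N, hN, -, hNverts, hNedges⟩ := isMatching_addEdge hM (P.adj_sub hy) huM hyM
      refine ⟨y, N, hN, ?_, ?_⟩
      · rw [hNverts]
        rintro x (hx | hx)
        · exact Or.inl (hsub hx)
        · rcases hx with rfl | rfl
          · exact Or.inl hut
          · exact Or.inr rfl
      · rw [hNedges, Set.union_singleton, Set.ncard_insert_of_notMem
          (fun hmem => huM (M.edge_vert (Subgraph.mem_edgeSet.1 hmem))) (Set.toFinite _)]
  | succ n ih =>
    intro M u hM hsub hexc hut huM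
    obtain ⟨y, hy⟩ := (hP.1 (hP.2 u)).exists
    by_cases hyM : y ∈ M.verts
    · obtain ⟨z, hz⟩ := matching_exists hM hyM
      have hzu : z ≠ u := by
        rintro rfl
        exact huM (M.edge_vert hz.symm)
      have hyzP : s(y, z) ∉ P.edgeSet := by
        intro hmem
        exact hzu (matching_unique hP.1 (Subgraph.mem_edgeSet.1 hmem) hy.symm)
      obtain ⟨M₂, hM₂, hle₂, hverts₂, hedges₂⟩ := isMatching_delete hM hz
      have huM₂ : u ∉ M₂.verts := by
        rw [hverts₂]; exact fun h => huM h.1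
      have hyM₂ : y ∉ M₂.verts := by
        rw [hverts₂]; simp
      obtain ⟨M', hM', hle', hverts', hedges'⟩ :=
        isMatching_addEdge hM₂ (P.adj_sub hy) huM₂ hyM₂
      have hzuy : z ∉ M'.verts := by
        rw [hverts', hverts₂]
        rintro (⟨-, hz2⟩ | h)
        · exact hz2 (by simp)
        · rcases h with rfl | rfl
          · exact hzu rfl
          · exact (G.ne_of_adj (M.adj_sub hz)) rfl
      have hsub' : M'.verts ⊆ t := by
        rw [hverts', hverts₂]
        rintro x (⟨hx, -⟩ | hx)
        · exact hsub hx
        · rcases hx with rfl | rfl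
          · exact hut
          · exact hsub hyM
      have hexc' : (M'.edgeSet \ P.edgeSet).ncard = n := by
        have h1 : M'.edgeSet \ P.edgeSet = (M.edgeSet \ P.edgeSet) \ {s(y, z)} := by
          rw [hedges', hedges₂]
          ext e
          simp only [Set.mem_diff, Set.mem_union, Set.mem_singleton_iff]
          constructor
          · rintro ⟨h1 | h1, h2⟩
            · exact ⟨⟨h1.1, h2⟩, h1.2⟩
            · exact absurd (h1 ▸ Subgraph.mem_edgeSet.2 hy) h2
          · rintro ⟨⟨h1, h2⟩, h3⟩
            exact ⟨Or.inl ⟨h1, h3⟩, h2⟩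
        have hmem : s(y, z) ∈ M.edgeSet \ P.edgeSet :=
          (Set.mem_diff _).mpr ⟨Subgraph.mem_edgeSet.2 hz, hyzP⟩
        rw [h1, Set.ncard_diff_singleton_of_mem hmem, hexc]
        omega
      have hcount : M'.edgeSet.ncard = M.edgeSet.ncard := by
        have h1 : s(u, y) ∉ M₂.edgeSet := fun hmem =>
          huM₂ (M₂.edge_vert (Subgraph.mem_edgeSet.1 hmem))
        have h2 : M₂.edgeSet.ncard = M.edgeSet.ncard - 1 := by
          rw [hedges₂, Set.ncard_diff_singleton_of_mem (Subgraph.mem_edgeSet.2 hz)]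
        have h3 : 1 ≤ M.edgeSet.ncard :=
          (Set.ncard_pos (Set.toFinite _)).2 ⟨s(y, z), Subgraph.mem_edgeSet.2 hz⟩
        rw [hedges', Set.union_singleton, Set.ncard_insert_of_notMem h1 (Set.toFinite _), h2]
        omega
      have hzt : z ∈ t := hsub (M.edge_vert hz.symm)
      obtain ⟨w, N, h1, h2, h3⟩ := ih M' z hM' hsub' hexc' hzt hzuy
      exact ⟨w, N, h1, h2, by rw [h3, hcount]⟩
    · obtain ⟨N, hN, -, hNverts, hNedges⟩ := isMatching_addEdge hM (P.adj_sub hy) huM hyM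
      refine ⟨y, N, hN, ?_, ?_⟩
      · rw [hNverts]
        rintro x (hx | hx)
        · exact Or.inl (hsub hx)
        · rcases hx with rfl | rfl
          · exact Or.inl hut
          · exact Or.inr rfl
      · rw [hNedges, Set.union_singleton, Set.ncard_insert_of_notMem
          (fun hmem => huM (M.edge_vert (Subgraph.mem_edgeSet.1 hmem))) (Set.toFinite _)]

end Key

omit [Fintype V] in
/-- If `q` is covered by a sub-matching `M` of a matching `Q`, then the `Q`-partner of `q`
is also covered by `M`. -/
lemma partner_mem_of_le {Q M : G.Subgraph} (hQ : Q.IsMatching) (hM : M.IsMatching)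
    (hle : M ≤ Q) {q v : V} (hqM : q ∈ M.verts) (hadj : Q.Adj q v) : v ∈ M.verts := by
  obtain ⟨p, hp⟩ := matching_exists hM hqM
  have hpv : p = v := matching_unique hQ (hle.2 hp) hadj
  exact hpv ▸ M.edge_vert hp.symm


end Stmt14Aux

/-- if `G` is `k`-extendable, non-bipartite, `k ≥ (ν+2)/4`, and `S` with
`|S| = 2k` is chosen with `G - S` having no perfect matching and `G[S]` of maximum
matching size as large as possible among such sets, then this size is `k - 1`. -/
theorem stmt14 {V : Type*} [Fintype V] (G : SimpleGraph V) (k : ℕ)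
    (hext : Extendable G k) (hnb : ¬ G.Colorable 2)
    (hk : Fintype.card V + 2 ≤ 4 * k)
    (S : Finset V) (hS : S.card = 2 * k)
    (hnoPM : ¬ ∃ M : (G.induce ((↑S : Set V)ᶜ)).Subgraph, M.IsPerfectMatching)
    (hmax : ∀ S' : Finset V, S'.card = 2 * k →
      (¬ ∃ M : (G.induce ((↑S' : Set V)ᶜ)).Subgraph, M.IsPerfectMatching) →
      maxMatchSize (G.induce (↑S' : Set V)) ≤ maxMatchSize (G.induce (↑S : Set V))) :
    maxMatchSize (G.induce (↑S : Set V)) = k - 1 := by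
  classical
  open Stmt14Aux in
  obtain ⟨hconn, ⟨Mk, hMk, hMkcard⟩, hextend⟩ := hext
  obtain ⟨P, hPle, hP⟩ := hextend Mk hMk hMkcard
  have hPverts : P.verts = Set.univ := Set.eq_univ_of_forall hP.2
  have hsncard : (↑S : Set V).ncard = 2 * k := by
    rw [Set.ncard_coe_finset, hS]
  -- k is positive
  have hkpos : 0 < k := by
    rcases Nat.eq_zero_or_pos k with hk0 | h
    · exfalso
      apply hnoPM
      rw [perfectMatching_induce_iff]
      refine ⟨P, hP.1, ?_⟩
      rw [hPverts]
      have : S = ∅ := Finset.card_eq_zero.1 (by rw [hS, hk0])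
      rw [this]
      simp
    · exact h
  set r : ℕ := maxMatchSize (G.induce (↑S : Set V)) with hrdef
  -- every matching of G inside S has at most r edges
  have hUB : ∀ N : G.Subgraph, N.IsMatching → N.verts ⊆ (↑S : Set V) →
      N.edgeSet.ncard ≤ r := fun N hN hsub => le_max_of_matching hN hsub
  -- Upper bound : r < k
  have hub : r < k := by
    by_contra hge
    push_neg at hge
    obtain ⟨N, hN, hNsub, hNcard⟩ :=
      hasMatchingOfSize_induce_iff.1 (maxMatchSize_spec (G.induce (↑S : Set V)))
    rw [← hrdef] at hNcard
    obtain ⟨N', hN', hN'le, hN'sub, hN'card⟩ := exists_submatching r N hN hNcard k hge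
    have hN'verts : N'.verts = (↑S : Set V) := by
      refine Set.eq_of_subset_of_ncard_le (hN'sub.trans hNsub) ?_ (Set.toFinite _)
      rw [hsncard, matching_verts_ncard k N' hN' hN'card]
    obtain ⟨Q, hQle, hQ⟩ := hextend N' hN' hN'card
    apply hnoPM
    rw [perfectMatching_induce_iff]
    have hcl : ∀ v ∈ ((↑S : Set V))ᶜ, ∀ q, Q.Adj v q → q ∈ ((↑S : Set V))ᶜ := by
      intro v hv q hadj
      intro hqS
      have : v ∈ N'.verts :=
        Stmt14Aux.partner_mem_of_le hQ.1 hN' hQle (hN'verts ▸ hqS) hadj.symm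
      exact hv (hN'verts ▸ this)
    obtain ⟨hRm, hRv, -⟩ := isMatching_induce_closed hQ.1 ((↑S : Set V))ᶜ
      (fun x _ => hQ.2 x) hcl
    exact ⟨Q.induce ((↑S : Set V))ᶜ, hRm, hRv⟩
  -- Lower bound : not (r + 2 ≤ k)
  have hlb : ¬ (r + 2 ≤ k) := by
    intro hlow
    -- maximum matching M₀ of G[S]
    obtain ⟨M0, hM0, hM0sub, hM0card⟩ :=
      hasMatchingOfSize_induce_iff.1 (maxMatchSize_spec (G.induce (↑S : Set V)))
    rw [← hrdef] at hM0card
    have hM0v : M0.verts.ncard = 2 * r := matching_verts_ncard r M0 hM0 hM0card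
    -- an uncovered vertex u₀ of S
    have hu0ex : ((↑S : Set V) \ M0.verts).Nonempty := by
      rw [Set.nonempty_iff_ne_empty]
      intro hem
      rw [Set.diff_eq_empty] at hem
      have : M0.verts = (↑S : Set V) := le_antisymm hM0sub hem
      rw [this, hsncard] at hM0v
      omega
    obtain ⟨u0, hu0S, hu0M⟩ := hu0ex
    -- augment to a matching N of size r+1 inside S ∪ {w}
    obtain ⟨w, N, hN, hNsub, hNcard⟩ :=
      key_augment hP _ M0 u0 hM0 hM0sub rfl hu0S hu0M
    rw [hM0card] at hNcard
    -- w ∉ S and w ∈ N.verts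
    have hwS : w ∉ (↑S : Set V) := by
      intro hwS
      have : N.verts ⊆ (↑S : Set V) := by
        intro x hx
        rcases hNsub hx with h | h
        · exact h
        · exact h ▸ hwS
      have := hUB N hN this
      omega
    have hwN : w ∈ N.verts := by
      by_contra hwN
      have : N.verts ⊆ (↑S : Set V) := by
        intro x hx
        rcases hNsub hx with h | h
        · exact h
        · exact absurd (h ▸ hx) hwN
      have := hUB N hN this
      omega
    -- x := N-partner of w ; M₁ := N minus the edge w-x
    obtain ⟨x, hwx⟩ := matching_exists hN hwN
    obtain ⟨M₁, hM₁, hM₁le, hM₁verts, hM₁edges⟩ := isMatching_delete hN hwx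
    have hM₁card : M₁.edgeSet.ncard = r := by
      rw [hM₁edges, Set.ncard_diff_singleton_of_mem (SimpleGraph.Subgraph.mem_edgeSet.2 hwx), hNcard]
      omega
    have hM₁sub : M₁.verts ⊆ (↑S : Set V) := by
      rw [hM₁verts]
      rintro y ⟨hy1, hy2⟩
      rcases hNsub hy1 with h | h
      · exact h
      · rw [Set.mem_singleton_iff] at h
        exact absurd (Or.inl h) hy2
    -- uncovered vertex u₁ of S with respect to N
    have hu1ex : ((↑S : Set V) \ N.verts).Nonempty := by
      rw [Set.nonempty_iff_ne_empty]
      intro hem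
      rw [Set.diff_eq_empty] at hem
      have hNvertsEq : N.verts = (↑S : Set V) ∪ {w} := by
        apply le_antisymm hNsub
        rintro y (hy | hy)
        · exact hem hy
        · exact hy ▸ hwN
      have h1 : N.verts.ncard = 2 * (r + 1) := matching_verts_ncard _ N hN hNcard
      have h2 : ((↑S : Set V) ∪ {w}).ncard = 2 * k + 1 := by
        rw [Set.union_singleton, Set.ncard_insert_of_notMem hwS (Set.toFinite _), hsncard]
      rw [hNvertsEq, h2] at h1
      omega
    obtain ⟨u1, hu1S, hu1N⟩ := hu1ex
    have hu1M₁ : u1 ∉ M₁.verts := by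
      rw [hM₁verts]
      exact fun h => hu1N h.1
    have hu1w : u1 ≠ w := fun h => hwS (h ▸ hu1S)
    -- the swapped set S'
    have hu1Sf : u1 ∈ S := hu1S
    have hwSf : w ∉ S := fun h => hwS (Finset.mem_coe.2 h)
    set S' : Finset V := insert w (S.erase u1) with hS'def
    have hS'card : S'.card = 2 * k := by
      rw [hS'def, Finset.card_insert_of_notMem (fun h => hwSf (Finset.erase_subset _ _ h)),
        Finset.card_erase_of_mem hu1Sf, hS]
      omega
    have hS'coe : (↑S' : Set V) = insert w ((↑S : Set V) \ {u1}) := by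
      rw [hS'def, Finset.coe_insert, Finset.coe_erase]
    -- N is a matching inside S'
    have hNsub' : N.verts ⊆ (↑S' : Set V) := by
      rw [hS'coe]
      intro y hy
      rcases hNsub hy with h | h
      · right
        refine ⟨h, ?_⟩
        simp only [Set.mem_singleton_iff]
        rintro rfl
        exact hu1N hy
      · left; exact h
    have hmm1 : r + 1 ≤ maxMatchSize (G.induce (↑S' : Set V)) := by
      have := le_max_of_matching hN hNsub'
      omega
    -- the complement of S' has a perfect matching
    have hpm' : ∃ M : (G.induce ((↑S' : Set V))ᶜ).Subgraph, M.IsPerfectMatching := by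
      by_contra hno
      have := hmax S' hS'card hno
      omega
    rw [perfectMatching_induce_iff] at hpm'
    obtain ⟨P₂, hP₂, hP₂verts⟩ := hpm'
    have hcompl : ((↑S' : Set V))ᶜ = (((↑S : Set V))ᶜ \ {w}) ∪ {u1} := by
      rw [hS'coe]
      ext y
      simp only [Set.mem_compl_iff, Set.mem_insert_iff, Set.mem_diff, Set.mem_union,
        Set.mem_singleton_iff]
      push_neg
      constructor
      · rintro ⟨h1, h2⟩
        by_cases hy : y = u1
        · exact Or.inr hy
        · exact Or.inl ⟨fun hyS => hy (h2 hyS), h1⟩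
      · rintro (⟨h1, h2⟩ | rfl)
        · exact ⟨h2, fun hyS => absurd hyS h1⟩
        · exact ⟨hu1w, fun _ => rfl⟩
    -- z := P₂-partner of u1
    have hu1P₂ : u1 ∈ P₂.verts := by
      rw [hP₂verts, hcompl]
      right; rfl
    obtain ⟨z, hu1z⟩ := matching_exists hP₂ hu1P₂
    have hzu1 : z ≠ u1 := fun h => (G.ne_of_adj (P₂.adj_sub hu1z)) h.symm
    have hzmem : z ∈ (((↑S : Set V))ᶜ \ {w}) := by
      have : z ∈ P₂.verts := P₂.edge_vert hu1z.symm
      rw [hP₂verts, hcompl] at this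
      rcases this with h | h
      · exact h
      · exact absurd h hzu1
    have hzS : z ∉ (↑S : Set V) := hzmem.1
    have hzw : z ≠ w := by
      intro h
      exact (by simpa using hzmem.2 : z ≠ w) h
    -- F₀ := P₂ minus the edge u1-z
    obtain ⟨F₀, hF₀, hF₀le, hF₀verts, hF₀edges⟩ := isMatching_delete hP₂ hu1z
    have hF₀v : F₀.verts = ((↑S : Set V))ᶜ \ {w, z} := by
      rw [hF₀verts, hP₂verts, hcompl]
      ext y
      simp only [Set.mem_diff, Set.mem_union, Set.mem_singleton_iff, Set.mem_insert_iff,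
        Set.mem_compl_iff]
      push_neg
      constructor
      · rintro ⟨h1 | rfl, h2, h3⟩
        · exact ⟨h1.1, h1.2, h3⟩
        · exact absurd rfl h2
      · rintro ⟨h1, h2, h3⟩
        refine ⟨Or.inl ⟨h1, h2⟩, ?_, h3⟩
        rintro rfl
        exact h1 hu1S
    -- cardinalities
    set D2 : ℕ := P₂.edgeSet.ncard with hD2def
    have hD2pos : 1 ≤ D2 :=
      (Set.ncard_pos (Set.toFinite _)).2 ⟨s(u1, z), SimpleGraph.Subgraph.mem_edgeSet.2 hu1z⟩
    have hF₀card : F₀.edgeSet.ncard = D2 - 1 := by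
      rw [hF₀edges, Set.ncard_diff_singleton_of_mem (SimpleGraph.Subgraph.mem_edgeSet.2 hu1z)]
    have hP₂v : P₂.verts.ncard = 2 * D2 := matching_verts_ncard D2 P₂ hP₂ rfl
    have hcompl_card : (((↑S : Set V))ᶜ).ncard = 2 * D2 := by
      have hw_mem : w ∈ ((↑S : Set V))ᶜ := hwS
      have hu1_not : u1 ∉ (((↑S : Set V))ᶜ \ {w}) := fun h => h.1 hu1S
      have h1 : P₂.verts.ncard = (((↑S : Set V))ᶜ).ncard := by
        rw [hP₂verts, hcompl, Set.union_singleton,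
          Set.ncard_insert_of_notMem hu1_not (Set.toFinite _),
          Set.ncard_diff_singleton_of_mem hw_mem]
        have : 1 ≤ (((↑S : Set V))ᶜ).ncard := (Set.ncard_pos (Set.toFinite _)).2 ⟨w, hw_mem⟩
        omega
      omega
    have hDk : D2 + 1 ≤ k := by
      have := Set.ncard_add_ncard_compl (↑S : Set V)
      rw [hsncard, hcompl_card, Nat.card_eq_fintype_card] at this
      omega
    -- k ≤ r + D2 via the perfect matching P
    have hklow : k ≤ r + D2 := by
      set C : Set V := {v | v ∈ (↑S : Set V) ∧ ∀ q, P.Adj v q → q ∈ (↑S : Set V)} with hCdef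
      have hCsub : C ⊆ (↑S : Set V) := fun v hv => hv.1
      have hCcl : ∀ v ∈ C, ∀ q, P.Adj v q → q ∈ C := by
        intro v hv q hadj
        refine ⟨hv.2 q hadj, ?_⟩
        intro p hp
        have hpv : v = p := matching_unique hP.1 hadj.symm hp
        exact hpv ▸ hv.1
      obtain ⟨hMinM, hMinV, hMinle⟩ := isMatching_induce_closed hP.1 C (fun v _ => hP.2 v) hCcl
      set cMin := (P.induce C).edgeSet.ncard with hcM
      have hC2 : C.ncard = 2 * cMin := by
        have := matching_verts_ncard cMin (P.induce C) hMinM rfl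
        rw [hMinV] at this
        exact this
      have hcMr : cMin ≤ r := hUB _ hMinM (by rw [hMinV]; exact hCsub)
      have hpf : ∀ v : V, ∃ q, P.Adj v q := fun v => (hP.1 (hP.2 v)).exists
      have hinj : ((↑S : Set V) \ C).ncard ≤ (((↑S : Set V))ᶜ).ncard := by
        refine Set.ncard_le_ncard_of_injOn (fun v => (hpf v).choose) ?_ ?_ (Set.toFinite _)
        · rintro v ⟨hvS, hvC⟩
          by_contra hqS
          rw [Set.mem_compl_iff, not_not] at hqS
          refine hvC ⟨hvS, ?_⟩
          intro p hp
          have : p = (hpf v).choose := matching_unique hP.1 hp ((hpf v).choose_spec)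
          exact this ▸ hqS
        · rintro v ⟨-, -⟩ v' ⟨-, -⟩ heq
          have heq' : (hpf v).choose = (hpf v').choose := heq
          have h1 : P.Adj ((hpf v).choose) v := ((hpf v).choose_spec).symm
          have h2 : P.Adj ((hpf v).choose) v' := by
            rw [heq']
            exact ((hpf v').choose_spec).symm
          exact matching_unique hP.1 h1 h2
      have hdiff : ((↑S : Set V) \ C).ncard = 2 * k - 2 * cMin := by
        rw [Set.ncard_diff hCsub (Set.toFinite _), hsncard, hC2]
      have hCle : C.ncard ≤ 2 * k := by
        rw [← hsncard]
        exact Set.ncard_le_ncard hCsub (Set.toFinite _)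
      rw [hC2] at hCle
      rw [hdiff, hcompl_card] at hinj
      omega
    -- Case split: r + D2 = k or k < r + D2
    rcases eq_or_lt_of_le hklow with heq | hgt
    · -- Case F1 : k = r + D2.
      -- K := M₁ ⊔ F₀ plus the edge u1-z has exactly k edges.
      have hdisj1 : Disjoint M₁.verts F₀.verts := by
        rw [Set.disjoint_left]
        intro a haM haF
        rw [hF₀v] at haF
        exact haF.1 (hM₁sub haM)
      obtain ⟨hE₁, hE₁v, hE₁e, hE₁d⟩ := isMatching_disjUnion hM₁ hF₀ hdisj1
      have hE₁card : (M₁ ⊔ F₀).edgeSet.ncard = r + (D2 - 1) := by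
        rw [hE₁e, Set.ncard_union_eq hE₁d (Set.toFinite _) (Set.toFinite _), hM₁card, hF₀card]
      have hu1E : u1 ∉ (M₁ ⊔ F₀).verts := by
        rw [hE₁v]
        rintro (h | h)
        · exact hu1M₁ h
        · rw [hF₀v] at h
          exact h.1 hu1S
      have hzE : z ∉ (M₁ ⊔ F₀).verts := by
        rw [hE₁v]
        rintro (h | h)
        · exact hzS (hM₁sub h)
        · rw [hF₀v] at h
          exact h.2 (Or.inr rfl)
      obtain ⟨K, hK, hKle, hKv, hKe⟩ :=
        isMatching_addEdge hE₁ (P₂.adj_sub hu1z) hu1E hzE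
      have hKcard : K.edgeSet.ncard = k := by
        have hnm : s(u1, z) ∉ (M₁ ⊔ F₀).edgeSet := fun h => hu1E ((M₁ ⊔ F₀).edge_vert
          (SimpleGraph.Subgraph.mem_edgeSet.1 h))
        rw [hKe, Set.union_singleton, Set.ncard_insert_of_notMem hnm (Set.toFinite _), hE₁card]
        omega
      obtain ⟨P₄, hP₄le, hP₄⟩ := hextend K hK hKcard
      -- all vertices of S uncovered by M₁ are matched by P₄ into {w, z}
      have hpf₄ : ∀ v : V, ∃ q, P₄.Adj v q := fun v => (hP₄.1 (hP₄.2 v)).exists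
      have hM₁leP₄ : M₁ ≤ P₄ := le_trans (le_trans le_sup_left hKle) hP₄le
      have hF₀leP₄ : F₀ ≤ P₄ := le_trans (le_trans le_sup_right hKle) hP₄le
      have hSC : ((↑S : Set V))ᶜ = F₀.verts ∪ {w, z} := by
        rw [hF₀v]
        rw [Set.diff_union_of_subset]
        rintro a (rfl | rfl)
        · exact hwS
        · exact hzS
      have himage : ∀ v ∈ (↑S : Set V) \ M₁.verts, (hpf₄ v).choose ∈ ({w, z} : Set V) := by
        rintro v ⟨hvS, hvM⟩
        set q := (hpf₄ v).choose with hqdef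
        have hq : P₄.Adj v q := (hpf₄ v).choose_spec
        have hqM₁ : q ∉ M₁.verts := by
          intro hqM
          exact hvM (partner_mem_of_le hP₄.1 hM₁ hM₁leP₄ hqM hq.symm)
        have hqF₀ : q ∉ F₀.verts := by
          intro hqF
          have := Stmt14Aux.partner_mem_of_le hP₄.1 hF₀ hF₀leP₄ hqF hq.symm
          rw [hF₀v] at this
          exact this.1 hvS
        by_cases hqS : q ∈ (↑S : Set V)
        · exfalso
          obtain ⟨N₂, hN₂, -, hN₂v, hN₂e⟩ :=
            isMatching_addEdge hM₁ (P₄.adj_sub hq) hvM hqM₁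
          have hN₂sub : N₂.verts ⊆ (↑S : Set V) := by
            rw [hN₂v]
            rintro a (ha | ha)
            · exact hM₁sub ha
            · rcases ha with rfl | rfl
              · exact hvS
              · exact hqS
          have hN₂card : N₂.edgeSet.ncard = r + 1 := by
            have hnm : s(v, q) ∉ M₁.edgeSet := fun h => hvM (M₁.edge_vert
              (SimpleGraph.Subgraph.mem_edgeSet.1 h))
            rw [hN₂e, Set.union_singleton, Set.ncard_insert_of_notMem hnm (Set.toFinite _),
              hM₁card]
          have := hUB N₂ hN₂ hN₂sub
          omega
        · have : q ∈ ((↑S : Set V))ᶜ := hqS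
          rw [hSC] at this
          rcases this with h | h
          · exact absurd h hqF₀
          · exact h
      have hinj₄ : ((↑S : Set V) \ M₁.verts).ncard ≤ ({w, z} : Set V).ncard := by
        refine Set.ncard_le_ncard_of_injOn (fun v => (hpf₄ v).choose) himage ?_ (Set.toFinite _)
        rintro v ⟨-, -⟩ v' ⟨-, -⟩ heq2
        have heq' : (hpf₄ v).choose = (hpf₄ v').choose := heq2
        have h1 : P₄.Adj ((hpf₄ v).choose) v := ((hpf₄ v).choose_spec).symm
        have h2 : P₄.Adj ((hpf₄ v).choose) v' := by
          rw [heq']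
          exact ((hpf₄ v').choose_spec).symm
        exact matching_unique hP₄.1 h1 h2
      have hM₁v : M₁.verts.ncard = 2 * r := matching_verts_ncard r M₁ hM₁ hM₁card
      have hdiffc : ((↑S : Set V) \ M₁.verts).ncard = 2 * k - 2 * r := by
        rw [Set.ncard_diff hM₁sub (Set.toFinite _), hsncard, hM₁v]
      have hpairc : ({w, z} : Set V).ncard = 2 := Set.ncard_pair (Ne.symm hzw)
      rw [hdiffc, hpairc] at hinj₄
      omega
    · -- Case F2 : k < r + D2.
      set m : ℕ := k + 1 - D2 with hmdef
      have hm1 : 1 ≤ m := by omega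
      have hmr : m ≤ r := by omega
      have hmD : m + D2 = k + 1 := by omega
      obtain ⟨X, hX, hXle, hXsub0, hXcard⟩ := exists_submatching r M0 hM0 hM0card m hmr
      have hXsub : X.verts ⊆ (↑S : Set V) := hXsub0.trans hM0sub
      -- K := X ⊔ F₀ has exactly k edges
      have hdisj2 : Disjoint X.verts F₀.verts := by
        rw [Set.disjoint_left]
        intro a haX haF
        rw [hF₀v] at haF
        exact haF.1 (hXsub haX)
      obtain ⟨hK, hKv, hKe, hKd⟩ := isMatching_disjUnion hX hF₀ hdisj2
      have hKcard : (X ⊔ F₀).edgeSet.ncard = k := by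
        rw [hKe, Set.ncard_union_eq hKd (Set.toFinite _) (Set.toFinite _), hXcard, hF₀card]
        omega
      obtain ⟨P₅, hP₅le, hP₅⟩ := hextend (X ⊔ F₀) hK hKcard
      have hXleP₅ : X ≤ P₅ := le_trans le_sup_left hP₅le
      have hF₀leP₅ : F₀ ≤ P₅ := le_trans le_sup_right hP₅le
      have hpf₅ : ∀ v : V, ∃ q, P₅.Adj v q := fun v => (hP₅.1 (hP₅.2 v)).exists
      have hSC : ((↑S : Set V))ᶜ = F₀.verts ∪ {w, z} := by
        rw [hF₀v, Set.diff_union_of_subset]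
        rintro a (rfl | rfl)
        · exact hwS
        · exact hzS
      have hwF₀ : w ∉ F₀.verts := by
        rw [hF₀v]
        exact fun h => h.2 (Or.inl rfl)
      have hzF₀ : z ∉ F₀.verts := by
        rw [hF₀v]
        exact fun h => h.2 (Or.inr rfl)
      -- the P₅-partner of any vertex outside F₀'s vertex set is not in F₀.verts
      have hnotF₀ : ∀ v, v ∉ F₀.verts → ∀ q, P₅.Adj v q → q ∉ F₀.verts := by
        intro v hv q hadj hqF
        exact hv (partner_mem_of_le hP₅.1 hF₀ hF₀leP₅ hqF hadj.symm)
      -- s₁ := partner of w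
      obtain ⟨s₁, hws₁⟩ := hpf₅ w
      have hs₁F₀ : s₁ ∉ F₀.verts := hnotF₀ w hwF₀ s₁ hws₁
      have hs₁z : s₁ ≠ z := by
        rintro rfl
        -- then F₀ plus the edge w-z is a perfect matching of the complement of S
        obtain ⟨N₃, hN₃, -, hN₃v, -⟩ :=
          isMatching_addEdge hF₀ (P₅.adj_sub hws₁) hwF₀ hzF₀
        apply hnoPM
        rw [perfectMatching_induce_iff]
        refine ⟨N₃, hN₃, ?_⟩
        rw [hN₃v, hF₀v, Set.diff_union_of_subset]
        rintro a (rfl | rfl)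
        · exact hwS
        · exact hzS
      have hs₁S : s₁ ∈ (↑S : Set V) := by
        by_contra hs₁S
        have : s₁ ∈ ((↑S : Set V))ᶜ := hs₁S
        rw [hSC] at this
        rcases this with h | h
        · exact hs₁F₀ h
        · rcases h with rfl | rfl
          · exact (G.ne_of_adj (P₅.adj_sub hws₁)) rfl
          · exact hs₁z rfl
      have hs₁X : s₁ ∉ X.verts := by
        intro hmem
        have := Stmt14Aux.partner_mem_of_le hP₅.1 hX hXleP₅ hmem hws₁.symm
        exact hwS (hXsub this)
      -- s₂ := partner of z
      obtain ⟨s₂, hzs₂⟩ := hpf₅ z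
      have hs₂F₀ : s₂ ∉ F₀.verts := hnotF₀ z hzF₀ s₂ hzs₂
      have hs₂w : s₂ ≠ w := by
        rintro rfl
        have : z = s₁ := matching_unique hP₅.1 hzs₂.symm hws₁
        exact hzS (this ▸ hs₁S)
      have hs₂S : s₂ ∈ (↑S : Set V) := by
        by_contra hs₂S
        have : s₂ ∈ ((↑S : Set V))ᶜ := hs₂S
        rw [hSC] at this
        rcases this with h | h
        · exact hs₂F₀ h
        · rcases h with rfl | rfl
          · exact hs₂w rfl
          · exact (G.ne_of_adj (P₅.adj_sub hzs₂)) rfl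
      have hs₂X : s₂ ∉ X.verts := by
        intro hmem
        have := Stmt14Aux.partner_mem_of_le hP₅.1 hX hXleP₅ hmem hzs₂.symm
        exact hzS (hXsub this)
      have hs₁s₂ : s₁ ≠ s₂ := by
        rintro rfl
        have : w = z := matching_unique hP₅.1 hws₁.symm hzs₂.symm
        exact hzw this.symm
      -- T := S minus X.verts minus {s₁, s₂} is closed under P₅-partners
      set T : Set V := ((↑S : Set V) \ X.verts) \ {s₁, s₂} with hTdef
      have hTcl : ∀ v ∈ T, ∀ q, P₅.Adj v q → q ∈ T := by
        rintro v ⟨⟨hvS, hvX⟩, hv12⟩ q hadj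
        have hqF₀ : q ∉ F₀.verts := hnotF₀ v (by rw [hF₀v]; exact fun h => h.1 hvS) q hadj
        have hqw : q ≠ w := by
          rintro rfl
          have : v = s₁ := matching_unique hP₅.1 hadj.symm hws₁
          exact hv12 (Or.inl this)
        have hqz : q ≠ z := by
          rintro rfl
          have : v = s₂ := matching_unique hP₅.1 hadj.symm hzs₂
          exact hv12 (Or.inr this)
        have hqS : q ∈ (↑S : Set V) := by
          by_contra hqS
          have : q ∈ ((↑S : Set V))ᶜ := hqS
          rw [hSC] at this
          rcases this with h | h
          · exact hqF₀ h
          · rcases h with rfl | rfl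
            · exact hqw rfl
            · exact hqz rfl
        have hqX : q ∉ X.verts := by
          intro hmem
          exact hvX (partner_mem_of_le hP₅.1 hX hXleP₅ hmem hadj.symm)
        have hqs₁ : q ≠ s₁ := by
          rintro rfl
          have : v = w := matching_unique hP₅.1 hadj.symm hws₁.symm
          exact hwS (this ▸ hvS)
        have hqs₂ : q ≠ s₂ := by
          rintro rfl
          have : v = z := matching_unique hP₅.1 hadj.symm hzs₂.symm
          exact hzS (this ▸ hvS)
        exact ⟨⟨hqS, hqX⟩, by rintro (h | h) <;> [exact hqs₁ h; exact hqs₂ h]⟩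
      obtain ⟨hYM, hYv, hYle⟩ := isMatching_induce_closed hP₅.1 T (fun v _ => hP₅.2 v) hTcl
      set Y := P₅.induce T with hYdef
      -- count the edges of Y
      have hXv : X.verts.ncard = 2 * m := matching_verts_ncard m X hX hXcard
      have hd1 : ((↑S : Set V) \ X.verts).ncard = 2 * k - 2 * m := by
        rw [Set.ncard_diff hXsub (Set.toFinite _), hsncard, hXv]
      have hmk : 2 * m ≤ 2 * k := by
        rw [← hXv, ← hsncard]
        exact Set.ncard_le_ncard hXsub (Set.toFinite _)
      have hs₁mem : s₁ ∈ (↑S : Set V) \ X.verts := ⟨hs₁S, hs₁X⟩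
      have hs₂mem : s₂ ∈ (↑S : Set V) \ X.verts := ⟨hs₂S, hs₂X⟩
      have hpair_sub : ({s₁, s₂} : Set V) ⊆ (↑S : Set V) \ X.verts := by
        rintro a (rfl | rfl)
        · exact hs₁mem
        · exact hs₂mem
      have hTcard : T.ncard = 2 * k - 2 * m - 2 := by
        rw [hTdef, Set.ncard_diff hpair_sub (Set.toFinite _), hd1, Set.ncard_pair hs₁s₂]
      have hYcount : T.ncard = 2 * Y.edgeSet.ncard := by
        have := matching_verts_ncard Y.edgeSet.ncard Y hYM rfl
        rw [hYv] at this
        exact this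
      -- Z := X ⊔ Y is a matching inside S with k - 1 edges : contradiction
      have hdisj3 : Disjoint X.verts Y.verts := by
        rw [hYv, Set.disjoint_left]
        intro a haX haT
        exact haT.1.2 haX
      obtain ⟨hZ, hZv, hZe, hZd⟩ := isMatching_disjUnion hX hYM hdisj3
      have hZsub : (X ⊔ Y).verts ⊆ (↑S : Set V) := by
        rw [hZv, hYv]
        rintro a (ha | ha)
        · exact hXsub ha
        · exact ha.1.1
      have hZcard : (X ⊔ Y).edgeSet.ncard = m + Y.edgeSet.ncard := by
        rw [hZe, Set.ncard_union_eq hZd (Set.toFinite _) (Set.toFinite _), hXcard]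
      have := hUB (X ⊔ Y) hZ hZsub
      rw [hZcard] at this
      -- now: m + Y.count ≤ r, with 2*Y.count = 2k - 2m - 2 and m + D2 = k + 1
      have hpair2 : 2 + 2 * m ≤ 2 * k := by omega
      rw [hTcard] at hYcount
      omega
  omega
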